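/- Let N ≥ 3 be an integer, p > 2, K ≥ 1 an integer, and γ ∈ [0, γ_p). Then the linearized equation −(e^{−γt}v'(t))' − (p−1)e^{−t}|U_γ(t)|^{p−2}v(t) = 0 on [0,∞) with v(0) = 0 has no bounded C² solution other than v ≡ 0. -/

import Mathlib

open Real Filter Set MeasureTheory Asymptotics

noncomputable section

/-- `α_p = max{((N−2)p − 2N)/2, 0}`. -/
def alphaP (N : ℕ) (p : ℝ) : ℝ := max ((((N : ℝ) - 2) * p - 2 * (N : ℝ)) / 2) 0

/-- `γ_p = (N−2)/(N+α_p)`. -/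
def gammaP (N : ℕ) (p : ℝ) : ℝ := ((N : ℝ) - 2) / ((N : ℝ) + alphaP N p)

/-- `U` is bounded on `[0,∞)`. -/
def BddOn (U : ℝ → ℝ) : Prop := ∃ C : ℝ, ∀ t, 0 ≤ t → |U t| ≤ C

/-- `U` is a C² solution of problem (P_γ):
`−(e^{−γt}U')' = e^{−t}|U|^{p−2}U` on `[0,∞)`, `U(0) = 0`. -/
def SolP (p γ : ℝ) (U : ℝ → ℝ) : Prop :=
  ContDiff ℝ 2 U ∧ U 0 = 0 ∧
  ∀ t : ℝ, 0 ≤ t →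
    deriv (fun s => Real.exp (-γ * s) * deriv U s) t
      = -(Real.exp (-t) * |U t| ^ (p - 2) * U t)

/-- `U` has exactly `m` zeros in `(0,∞)`. -/
def ZeroCount (U : ℝ → ℝ) (m : ℕ) : Prop :=
  {t : ℝ | 0 < t ∧ U t = 0}.Finite ∧ {t : ℝ | 0 < t ∧ U t = 0}.ncard = m

/-- characterization of `U_γ`: bounded solution of (P_γ) with exactly `K−1`
zeros in `(0,∞)` and positive limit at `+∞`. -/
def IsUsol (p γ : ℝ) (K : ℕ) (U : ℝ → ℝ) : Prop :=
  SolP p γ U ∧ BddOn U ∧ ZeroCount U (K - 1) ∧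
    ∃ L : ℝ, 0 < L ∧ Filter.Tendsto U Filter.atTop (nhds L)

/-- `Ψ` is a bounded solution of the linearized eigenvalue problem (E_γ) with
eigenvalue `ν`: `−(e^{−γt}Ψ')' − (p−1)e^{−t}|U_γ|^{p−2}Ψ = ν e^{−γt}Ψ`, `Ψ(0)=0`. -/
def EigenEq (p γ : ℝ) (U : ℝ → ℝ) (ν : ℝ) (Ψ : ℝ → ℝ) : Prop :=
  ContDiff ℝ 2 Ψ ∧ Ψ 0 = 0 ∧ BddOn Ψ ∧
  ∀ t : ℝ, 0 ≤ t →
    deriv (fun s => Real.exp (-γ * s) * deriv Ψ s) t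
      = -((p - 1) * Real.exp (-t) * |U t| ^ (p - 2) * Ψ t + ν * Real.exp (-γ * t) * Ψ t)

/-- nontrivial on `[0,∞)`. -/
def Nontriv (Ψ : ℝ → ℝ) : Prop := ∃ t : ℝ, 0 ≤ t ∧ Ψ t ≠ 0

/-- `ν` is a negative eigenvalue of (E_γ). -/
def IsNegEigen (p γ : ℝ) (K : ℕ) (ν : ℝ) : Prop :=
  ν < 0 ∧ ∀ U : ℝ → ℝ, IsUsol p γ K U → ∃ Ψ, EigenEq p γ U ν Ψ ∧ Nontriv Ψ

/-- `ν j γ` (for `1 ≤ j ≤ K`) enumerates the negative eigenvalues of (E_γ)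
in strictly increasing order. -/
def Enumerates (p : ℝ) (K : ℕ) (γP : ℝ) (ν : ℕ → ℝ → ℝ) : Prop :=
  ∀ γ : ℝ, 0 ≤ γ → γ < γP →
    (∀ j j' : ℕ, 1 ≤ j → j < j' → j' ≤ K → ν j γ < ν j' γ) ∧
    (∀ j : ℕ, 1 ≤ j → j ≤ K → IsNegEigen p γ K (ν j γ)) ∧
    (∀ μ : ℝ, IsNegEigen p γ K μ → ∃ j : ℕ, 1 ≤ j ∧ j ≤ K ∧ μ = ν j γ)

section auxiliary

lemma hasDerivAt_absPow {p : ℝ} (hp : 2 < p) (u : ℝ) :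
    HasDerivAt (fun x : ℝ => |x| ^ (p - 2) * x) ((p - 1) * |u| ^ (p - 2)) u := by
  rcases lt_trichotomy u 0 with hu | hu | hu
  · have h1 : HasDerivAt (fun x : ℝ => -((-x) ^ (p - 1))) ((p - 1) * (-u) ^ (p - 2)) u := by
      have h0 : HasDerivAt (fun x : ℝ => (-x) ^ (p - 1)) ((p - 1) * (-u) ^ (p - 1 - 1) * (-1)) u := by
        exact (Real.hasDerivAt_rpow_const (p := p - 1) (Or.inl (by linarith))).comp u (hasDerivAt_neg u)
      have := h0.neg
      exact this.congr_deriv (by ring_nf)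
    have heq : (fun x : ℝ => |x| ^ (p - 2) * x) =ᶠ[nhds u] (fun x : ℝ => -((-x) ^ (p - 1))) := by
      filter_upwards [Iio_mem_nhds hu] with x hx
      have hx' : (0:ℝ) < -x := by simpa using hx
      rw [abs_of_neg hx]
      rw [show p - 1 = (p - 2) + 1 by ring, Real.rpow_add_one (by linarith)]
      ring
    have h2 := h1.congr_of_eventuallyEq heq
    exact h2.congr_deriv (by rw [abs_of_neg hu])
  · subst hu
    have h0 : (p - 1) * |(0:ℝ)| ^ (p - 2) = 0 := by
      rw [abs_zero, Real.zero_rpow (by linarith : p - 2 ≠ 0)]; ring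
    rw [hasDerivAt_iff_tendsto_slope, h0]
    have habs : Tendsto (fun x : ℝ => |x| ^ (p - 2)) (nhds 0) (nhds 0) := by
      have h := Real.continuousAt_rpow_const 0 (p-2) (Or.inr (by linarith : (0:ℝ) ≤ p - 2))
      have h2 : ContinuousAt (fun y : ℝ => y ^ (p-2)) |(0:ℝ)| := by simpa using h
      have hc : ContinuousAt (fun x : ℝ => |x| ^ (p - 2)) 0 := h2.comp continuous_abs.continuousAt
      have := hc.tendsto
      simpa [Real.zero_rpow (by linarith : p - 2 ≠ 0)] using this
    apply Tendsto.congr' _ (habs.mono_left nhdsWithin_le_nhds)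
    filter_upwards [self_mem_nhdsWithin] with x hx
    have hx' : x ≠ 0 := hx
    rw [slope_def_field]
    field_simp
    simp
  · have h1 : HasDerivAt (fun x : ℝ => x ^ (p - 1)) ((p - 1) * u ^ (p - 2)) u := by
      have h0 := Real.hasDerivAt_rpow_const (x := u) (p := p - 1) (Or.inl (ne_of_gt hu))
      convert h0 using 2
      ring
    have heq : (fun x : ℝ => |x| ^ (p - 2) * x) =ᶠ[nhds u] (fun x : ℝ => x ^ (p - 1)) := by
      filter_upwards [Ioi_mem_nhds hu] with x hx
      have hx' : (0:ℝ) < x := hx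
      rw [abs_of_pos hx']
      rw [show p - 1 = (p - 2) + 1 by ring, Real.rpow_add_one (ne_of_gt hx')]
    have h2 := h1.congr_of_eventuallyEq heq
    exact h2.congr_deriv (by rw [abs_of_pos hu])

lemma uniq (γ : ℝ) (r w w1 : ℝ → ℝ) (hr : ContinuousOn r (Set.Ici 0))
    (hw : ∀ t, HasDerivAt w (w1 t) t) (hw1c : Continuous w1)
    (hw1 : ∀ t, 0 < t → HasDerivAt w1 (γ * w1 t - r t * w t) t)
    (h0 : w 0 = 0) (h1 : w1 0 = 0) : ∀ t, 0 ≤ t → w t = 0 := by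
  intro T hT
  rcases eq_or_lt_of_le hT with hT0 | hT0
  · rw [← hT0]; exact h0
  obtain ⟨R, hR⟩ := (isCompact_Icc (a := (0:ℝ)) (b := T)).exists_bound_of_continuousOn
    (hr.mono (fun x hx => hx.1))
  set C : ℝ := 1 + |R| + 2 * |γ| with hC
  set g : ℝ → ℝ := fun t => (w t ^ 2 + w1 t ^ 2) * Real.exp (-C * t) with hg
  have hwc : Continuous w := by
    have : Differentiable ℝ w := fun t => (hw t).differentiableAt
    exact this.continuous
  have hgc : Continuous g := by
    continuity
  have hganti : AntitoneOn g (Set.Icc 0 T) := by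
    apply antitoneOn_of_deriv_nonpos (convex_Icc 0 T) hgc.continuousOn
    · intro x hx
      rw [interior_Icc] at hx
      have hd : HasDerivAt g ((2 * w x * w1 x + 2 * w1 x * (γ * w1 x - r x * w x)) * Real.exp (-C * x)
          + (w x ^ 2 + w1 x ^ 2) * (-C * Real.exp (-C * x))) x := by
        have h2 : HasDerivAt (fun t => w t ^ 2 + w1 t ^ 2)
            (2 * w x * w1 x + 2 * w1 x * (γ * w1 x - r x * w x)) x := by
          have ha : HasDerivAt (fun t => w t ^ 2) (2 * w x * w1 x) x := by
            have := (hw x).pow 2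
            exact this.congr_deriv (by push_cast; ring)
          have hb : HasDerivAt (fun t => w1 t ^ 2) (2 * w1 x * (γ * w1 x - r x * w x)) x := by
            have := (hw1 x hx.1).pow 2
            exact this.congr_deriv (by push_cast; ring)
          exact ha.add hb
        have he : HasDerivAt (fun t => Real.exp (-C * t)) (-C * Real.exp (-C * x)) x := by
          have := (hasDerivAt_id x).const_mul (-C)
          have := (this.exp)
          simpa [mul_comm] using this
        exact h2.mul he
      exact hd.differentiableAt.differentiableWithinAt
    · intro x hx
      rw [interior_Icc] at hx
      have hd : HasDerivAt g ((2 * w x * w1 x + 2 * w1 x * (γ * w1 x - r x * w x)) * Real.exp (-C * x)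
          + (w x ^ 2 + w1 x ^ 2) * (-C * Real.exp (-C * x))) x := by
        have h2 : HasDerivAt (fun t => w t ^ 2 + w1 t ^ 2)
            (2 * w x * w1 x + 2 * w1 x * (γ * w1 x - r x * w x)) x := by
          have ha : HasDerivAt (fun t => w t ^ 2) (2 * w x * w1 x) x := by
            have := (hw x).pow 2
            exact this.congr_deriv (by push_cast; ring)
          have hb : HasDerivAt (fun t => w1 t ^ 2) (2 * w1 x * (γ * w1 x - r x * w x)) x := by
            have := (hw1 x hx.1).pow 2
            exact this.congr_deriv (by push_cast; ring)
          exact ha.add hb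
        have he : HasDerivAt (fun t => Real.exp (-C * t)) (-C * Real.exp (-C * x)) x := by
          have := (hasDerivAt_id x).const_mul (-C)
          have := (this.exp)
          simpa [mul_comm] using this
        exact h2.mul he
      rw [hd.deriv]
      have hrx : |r x| ≤ |R| := by
        have := hR x ⟨le_of_lt hx.1, le_of_lt hx.2⟩
        calc |r x| = ‖r x‖ := rfl
        _ ≤ R := this
        _ ≤ |R| := le_abs_self R
      have hepos : 0 < Real.exp (-C * x) := Real.exp_pos _
      have key : 2 * w x * w1 x + 2 * w1 x * (γ * w1 x - r x * w x) - C * (w x ^ 2 + w1 x ^ 2) ≤ 0 := by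
        have h1' : 2 * w x * w1 x ≤ w x ^ 2 + w1 x ^ 2 := by nlinarith [sq_nonneg (w x - w1 x)]
        have h2' : 2 * γ * w1 x ^ 2 ≤ 2 * |γ| * w1 x ^ 2 := by
          nlinarith [le_abs_self γ, sq_nonneg (w1 x)]
        have h3' : -2 * (r x) * (w x) * (w1 x) ≤ |R| * (w x ^ 2 + w1 x ^ 2) := by
          have habs : -2 * (r x) * (w x) * (w1 x) ≤ |r x| * (2 * |w x| * |w1 x|) := by
            have : -2 * (r x) * (w x) * (w1 x) ≤ |(-2) * r x * w x * w1 x| := le_abs_self _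
            calc -2 * (r x) * (w x) * (w1 x) ≤ |(-2) * r x * w x * w1 x| := this
            _ = |r x| * (2 * |w x| * |w1 x|) := by
                rw [abs_mul, abs_mul, abs_mul]
                simp [abs_of_nonneg]
                ring
          have h2ab : 2 * |w x| * |w1 x| ≤ w x ^ 2 + w1 x ^ 2 := by
            nlinarith [sq_nonneg (|w x| - |w1 x|), sq_abs (w x), sq_abs (w1 x)]
          calc -2 * (r x) * (w x) * (w1 x) ≤ |r x| * (2 * |w x| * |w1 x|) := habs
          _ ≤ |R| * (w x ^ 2 + w1 x ^ 2) := by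
              apply mul_le_mul hrx h2ab (by positivity) (abs_nonneg R)
        have hsum : 0 ≤ w x ^ 2 + w1 x ^ 2 := by positivity
        rw [hC]
        nlinarith [h1', h2', h3', mul_nonneg (abs_nonneg γ) (sq_nonneg (w x))]
      nlinarith [key, hepos, mul_nonneg (le_of_lt hepos) (le_of_lt hepos)]
  have hg0 : g 0 = 0 := by simp [hg, h0, h1]
  have hgT : g T ≤ 0 := by
    have := hganti (Set.left_mem_Icc.mpr hT) ⟨hT, le_refl T⟩ hT
    rw [hg0] at this; exact this
  have : 0 ≤ g T := by positivity
  have hgT0 : g T = 0 := le_antisymm hgT this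
  have : w T ^ 2 + w1 T ^ 2 = 0 := by
    have he := Real.exp_pos (-C * T)
    by_contra hne
    have h' : 0 < w T ^ 2 + w1 T ^ 2 := lt_of_le_of_ne (by positivity) (Ne.symm hne)
    have hlt : 0 < g T := mul_pos h' he
    rw [hgT0] at hlt
    exact lt_irrefl 0 hlt
  have hw2 : w T ^ 2 = 0 := by nlinarith [sq_nonneg (w T), sq_nonneg (w1 T)]
  exact pow_eq_zero_iff two_ne_zero |>.mp hw2

lemma decay (w g : ℝ → ℝ) (K : ℝ) (hK : 0 ≤ K)
    (hw : ∀ t, 0 ≤ t → HasDerivAt w (g t) t)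
    (hgc : ContinuousOn g (Set.Ici 0))
    (hb : ∀ t, 0 ≤ t → |g t| ≤ K * Real.exp (-t)) :
    ∃ ℓ, Tendsto w atTop (nhds ℓ) ∧ ∀ t, 0 ≤ t → |w t - ℓ| ≤ K * Real.exp (-t) := by
  have key : ∀ t s : ℝ, 0 ≤ t → t ≤ s → |w s - w t| ≤ K * Real.exp (-t) := by
    intro t s ht hts
    have huIcc : Set.uIcc t s = Set.Icc t s := Set.uIcc_of_le hts
    have hsub : Set.Icc t s ⊆ Set.Ici 0 := fun x hx => le_trans ht hx.1
    have hint : IntervalIntegrable g MeasureTheory.volume t s := by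
      apply ContinuousOn.intervalIntegrable
      rw [huIcc]; exact hgc.mono hsub
    have hftc : ∫ τ in t..s, g τ = w s - w t := by
      apply intervalIntegral.integral_eq_sub_of_hasDerivAt
      · intro x hx
        rw [huIcc] at hx
        exact hw x (le_trans ht hx.1)
      · exact hint
    have hint2 : IntervalIntegrable (fun τ => K * Real.exp (-τ)) MeasureTheory.volume t s := by
      apply Continuous.intervalIntegrable
      continuity
    have habs : IntervalIntegrable (fun τ => |g τ|) MeasureTheory.volume t s := hint.abs
    have h1 : |∫ τ in t..s, g τ| ≤ ∫ τ in t..s, |g τ| :=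
      intervalIntegral.abs_integral_le_integral_abs hts
    have h2 : (∫ τ in t..s, |g τ|) ≤ ∫ τ in t..s, K * Real.exp (-τ) := by
      apply intervalIntegral.integral_mono_on hts habs hint2
      intro x hx
      exact hb x (le_trans ht hx.1)
    have h3 : (∫ τ in t..s, K * Real.exp (-τ)) = K * Real.exp (-t) - K * Real.exp (-s) := by
      have : ∫ τ in t..s, K * Real.exp (-τ)
          = (fun τ => -K * Real.exp (-τ)) s - (fun τ => -K * Real.exp (-τ)) t := by
        apply intervalIntegral.integral_eq_sub_of_hasDerivAt
        · intro x _
          have h0 : HasDerivAt (fun τ : ℝ => Real.exp (-τ)) (-Real.exp (-x)) x := by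
            have := ((hasDerivAt_id x).neg).exp
            simpa using this
          have := h0.const_mul (-K)
          simpa [mul_comm, neg_mul, mul_neg] using this
        · apply Continuous.intervalIntegrable; continuity
      rw [this]; ring
    rw [← hftc]
    calc |∫ τ in t..s, g τ| ≤ ∫ τ in t..s, |g τ| := h1
      _ ≤ ∫ τ in t..s, K * Real.exp (-τ) := h2
      _ = K * Real.exp (-t) - K * Real.exp (-s) := h3
      _ ≤ K * Real.exp (-t) := by nlinarith [Real.exp_pos (-s)]
  have hcauchy : CauchySeq w := by
    rw [Metric.cauchySeq_iff']
    intro ε hε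
    set N : ℝ := max 0 (Real.log ((K + 1) / ε) + 1) with hN
    refine ⟨N, fun n hn => ?_⟩
    have hN0 : 0 ≤ N := le_max_left _ _
    have hNe : K * Real.exp (-N) < ε := by
      have h1 : Real.log ((K + 1) / ε) + 1 ≤ N := le_max_right _ _
      have hpos : 0 < (K + 1) / ε := by positivity
      have h2 : Real.exp (-N) ≤ Real.exp (-(Real.log ((K + 1) / ε) + 1)) := by
        apply Real.exp_le_exp.mpr; linarith
      have h3 : Real.exp (-(Real.log ((K + 1) / ε) + 1))
          = (ε / (K + 1)) * Real.exp (-1) := by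
        rw [neg_add, Real.exp_add, Real.exp_neg, Real.exp_log hpos]
        field_simp
      have h4 : Real.exp (-1) < 1 := by
        rw [Real.exp_lt_one_iff]; norm_num
      have h5 : Real.exp (-N) < ε / (K + 1) := by
        calc Real.exp (-N) ≤ (ε / (K + 1)) * Real.exp (-1) := by rw [← h3]; exact h2
          _ < (ε / (K + 1)) * 1 := by
              apply mul_lt_mul_of_pos_left h4 (by positivity)
          _ = ε / (K + 1) := mul_one _
      calc K * Real.exp (-N) ≤ K * (ε / (K + 1)) := by
            apply mul_le_mul_of_nonneg_left (le_of_lt h5) hK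
        _ = (K * ε) / (K + 1) := by ring
        _ < ε := by
            rw [div_lt_iff₀ (by linarith : (0:ℝ) < K + 1)]
            nlinarith
    have := key N n hN0 hn
    rw [Real.dist_eq]
    calc |w n - w N| ≤ K * Real.exp (-N) := this
      _ < ε := hNe
  obtain ⟨ℓ, hl⟩ := cauchySeq_tendsto_of_complete hcauchy
  refine ⟨ℓ, hl, fun t ht => ?_⟩
  have htend : Tendsto (fun s => |w t - w s|) atTop (nhds |w t - ℓ|) :=
    (tendsto_const_nhds.sub hl).abs
  apply le_of_tendsto htend
  filter_upwards [eventually_ge_atTop t] with s hs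
  rw [abs_sub_comm]
  exact key t s ht hs

lemma limzero_pos (γ Cv ℓ : ℝ) (hγ : 0 ≤ γ) (hl : 0 < ℓ) (v v1 : ℝ → ℝ)
    (hv : ∀ t, HasDerivAt v (v1 t) t) (hv1c : Continuous v1)
    (hvb : ∀ t, 0 ≤ t → |v t| ≤ Cv)
    (hw : Tendsto (fun t => Real.exp (-γ * t) * v1 t) atTop (nhds ℓ)) : False := by
  have hCv : 0 ≤ Cv := le_trans (abs_nonneg _) (hvb 0 le_rfl)
  have hev : ∀ᶠ t in atTop, ℓ / 2 < Real.exp (-γ * t) * v1 t :=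
    hw.eventually (eventually_gt_nhds (by linarith))
  obtain ⟨T', hT'⟩ := eventually_atTop.mp hev
  set T : ℝ := max T' 0 with hTdef
  have hT0 : 0 ≤ T := le_max_right _ _
  have hv1lb : ∀ s, T ≤ s → ℓ / 2 ≤ v1 s := by
    intro s hs
    have hs0 : 0 ≤ s := le_trans hT0 hs
    have h1 := hT' s (le_trans (le_max_left _ _) hs)
    have hexp1 : Real.exp (γ * s) * Real.exp (-γ * s) = 1 := by
      rw [← Real.exp_add]; ring_nf; exact Real.exp_zero
    have hge1 : 1 ≤ Real.exp (γ * s) := by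
      rw [← Real.exp_zero]; apply Real.exp_le_exp.mpr; positivity
    have : v1 s = Real.exp (γ * s) * (Real.exp (-γ * s) * v1 s) := by
      rw [← mul_assoc, hexp1, one_mul]
    rw [this]
    calc ℓ / 2 = 1 * (ℓ / 2) := (one_mul _).symm
      _ ≤ Real.exp (γ * s) * (ℓ / 2) := by
          apply mul_le_mul_of_nonneg_right hge1 (by linarith)
      _ ≤ Real.exp (γ * s) * (Real.exp (-γ * s) * v1 s) := by
          apply mul_le_mul_of_nonneg_left (le_of_lt h1) (le_of_lt (Real.exp_pos _))
  set s : ℝ := T + (2 / ℓ) * (2 * Cv + 1) with hsdef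
  have hTs : T ≤ s := by
    have h : 0 ≤ (2 / ℓ) * (2 * Cv + 1) := by positivity
    rw [hsdef]
    linarith
  have hs0 : 0 ≤ s := le_trans hT0 hTs
  have hftc : ∫ τ in T..s, v1 τ = v s - v T := by
    apply intervalIntegral.integral_eq_sub_of_hasDerivAt (fun x _ => hv x)
    exact hv1c.intervalIntegrable _ _
  have hmono : (∫ τ in T..s, (ℓ / 2 : ℝ)) ≤ ∫ τ in T..s, v1 τ := by
    apply intervalIntegral.integral_mono_on hTs (intervalIntegrable_const)
      (hv1c.intervalIntegrable _ _)
    intro x hx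
    exact hv1lb x hx.1
  rw [intervalIntegral.integral_const, hftc] at hmono
  have hsT : (s - T) • (ℓ / 2 : ℝ) = (2 * Cv + 1) := by
    rw [smul_eq_mul, hsdef]
    field_simp
    ring
  rw [hsT] at hmono
  have h1 : |v s| ≤ Cv := hvb s hs0
  have h2 : |v T| ≤ Cv := hvb T hT0
  rw [abs_le] at h1 h2
  linarith [h1.2, h2.1]

lemma limzero (γ Cv ℓ : ℝ) (hγ : 0 ≤ γ) (v v1 : ℝ → ℝ)
    (hv : ∀ t, HasDerivAt v (v1 t) t) (hv1c : Continuous v1)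
    (hvb : ∀ t, 0 ≤ t → |v t| ≤ Cv)
    (hw : Tendsto (fun t => Real.exp (-γ * t) * v1 t) atTop (nhds ℓ)) : ℓ = 0 := by
  rcases lt_trichotomy ℓ 0 with h | h | h
  · exfalso
    apply limzero_pos γ Cv (-ℓ) hγ (by linarith) (fun t => -v t) (fun t => -v1 t)
      (fun t => (hv t).neg) hv1c.neg (fun t ht => by rw [abs_neg]; exact hvb t ht)
    have := hw.neg
    simpa [mul_comm] using this
  · exact h
  · exfalso
    exact limzero_pos γ Cv ℓ hγ h v v1 hv hv1c hvb hw

lemma hasDerivAt_expw (γ : ℝ) (W W1 : ℝ → ℝ) (t : ℝ) (hW : HasDerivAt W (W1 t) t) :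
    HasDerivAt (fun s => Real.exp (-γ * s) * W s)
      (-γ * Real.exp (-γ * t) * W t + Real.exp (-γ * t) * W1 t) t := by
  have he : HasDerivAt (fun s : ℝ => Real.exp (-γ * s)) (-γ * Real.exp (-γ * t)) t := by
    have := ((hasDerivAt_id t).const_mul (-γ)).exp
    simpa [mul_comm] using this
  have := he.mul hW
  exact this

lemma deriv2_eq (γ : ℝ) (U : ℝ → ℝ) (h : ℝ) (t : ℝ)
    (hUd : Differentiable ℝ (deriv U))
    (heq : deriv (fun s => Real.exp (-γ * s) * deriv U s) t = h) :
    deriv (deriv U) t = γ * deriv U t + Real.exp (γ * t) * h := by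
  have hd := hasDerivAt_expw γ (deriv U) (deriv (deriv U)) t (hUd t).hasDerivAt
  have h2 : -γ * Real.exp (-γ * t) * deriv U t + Real.exp (-γ * t) * deriv (deriv U) t = h := by
    rw [← hd.deriv]; exact heq
  have hE : Real.exp (-γ * t) * Real.exp (γ * t) = 1 := by
    rw [← Real.exp_add]; ring_nf; exact Real.exp_zero
  have h3 : Real.exp (-γ * t) * (deriv (deriv U) t)
      = Real.exp (-γ * t) * (γ * deriv U t + Real.exp (γ * t) * h) := by
    linear_combination h2 - h * hE
  exact mul_left_cancel₀ (Real.exp_ne_zero _) h3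

lemma const_of_deriv0 (W : ℝ → ℝ) (hWc : Continuous W)
    (hd : ∀ x, 0 ≤ x → HasDerivAt W 0 x) : ∀ t, 0 ≤ t → W t = W 0 := by
  intro t ht
  have := constant_of_has_deriv_right_zero (f := W) (a := 0) (b := t) hWc.continuousOn
    (fun x hx => (hd x hx.1).hasDerivWithinAt)
  exact this t ⟨ht, le_rfl⟩

end auxiliary

/-- nondegeneracy of `U_γ` for `γ ∈ [0, γ_p)`: the linearized
equation `−(e^{−γt}v')' − (p−1)e^{−t}|U_γ|^{p−2}v = 0`, `v(0)=0`, has no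
bounded C² solution other than `v ≡ 0` on `[0,∞)`. -/
theorem stmt3 (N : ℕ) (hN : 3 ≤ N) (p : ℝ) (hp : 2 < p) (K : ℕ) (hK : 1 ≤ K)
    (γ : ℝ) (hγ0 : 0 ≤ γ) (hγ1 : γ < gammaP N p)
    (U : ℝ → ℝ) (hU : IsUsol p γ K U)
    (v : ℝ → ℝ) (hv2 : ContDiff ℝ 2 v) (hv0 : v 0 = 0) (hvb : BddOn v)
    (hveq : ∀ t : ℝ, 0 ≤ t →
      deriv (fun s => Real.exp (-γ * s) * deriv v s) t
        = -((p - 1) * Real.exp (-t) * |U t| ^ (p - 2) * v t)) :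
    ∀ t : ℝ, 0 ≤ t → v t = 0 := by
  obtain ⟨⟨hU2, hU0, hUeq⟩, ⟨M, hM⟩, -, L, hL, hUlim⟩ := hU
  obtain ⟨Cv, hCv⟩ := hvb
  have hM0 : 0 ≤ M := le_trans (abs_nonneg _) (hM 0 le_rfl)
  have hCv0 : 0 ≤ Cv := le_trans (abs_nonneg _) (hCv 0 le_rfl)
  -- γ < 1
  have hγlt1 : γ < 1 := by
    have hN3 : (3:ℝ) ≤ (N:ℝ) := by exact_mod_cast hN
    have hα : 0 ≤ alphaP N p := le_max_right _ _
    have hden : (0:ℝ) < (N:ℝ) + alphaP N p := by linarith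
    have : gammaP N p < 1 := by
      rw [gammaP, div_lt_one hden]; linarith
    linarith
  have hp2 : (0:ℝ) < p - 2 := by linarith
  set c : ℝ := (γ - 1) / (p - 2) with hc_def
  have hc : c * (p - 2) = γ - 1 := by
    rw [hc_def]; field_simp
  -- smoothness extraction
  have hUdiff : Differentiable ℝ U := hU2.differentiable (by norm_num)
  have hUcont : Continuous U := hUdiff.continuous
  have hU2' : ContDiff ℝ (1 + 1) U := by
    have : ((1:WithTop ℕ∞) + 1) = 2 := by norm_num
    rw [this]; exact hU2
  have hU1d : ContDiff ℝ 1 (deriv U) := (contDiff_succ_iff_deriv.mp hU2').2.2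
  have hU'diff : Differentiable ℝ (deriv U) := hU1d.differentiable (by norm_num)
  have hU'cont : Continuous (deriv U) := hU'diff.continuous
  have hU''cont : Continuous (deriv (deriv U)) := (contDiff_one_iff_deriv.mp hU1d).2
  have hvdiff : Differentiable ℝ v := hv2.differentiable (by norm_num)
  have hvcont : Continuous v := hvdiff.continuous
  have hv2' : ContDiff ℝ (1 + 1) v := by
    have : ((1:WithTop ℕ∞) + 1) = 2 := by norm_num
    rw [this]; exact hv2
  have hv1d : ContDiff ℝ 1 (deriv v) := (contDiff_succ_iff_deriv.mp hv2').2.2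
  have hv'diff : Differentiable ℝ (deriv v) := hv1d.differentiable (by norm_num)
  have hv'cont : Continuous (deriv v) := hv'diff.continuous
  -- nonlinearity
  have hFc : Continuous (fun u : ℝ => |u| ^ (p - 2) * u) :=
    continuous_iff_continuousAt.mpr fun u => (hasDerivAt_absPow hp u).differentiableAt.continuousAt
  have hFU : ∀ t : ℝ, HasDerivAt (fun s => |U s| ^ (p - 2) * U s)
      (((p - 1) * |U t| ^ (p - 2)) * deriv U t) t := by
    intro t
    exact (hasDerivAt_absPow hp (U t)).comp t (hUdiff t).hasDerivAt
  have habsc : Continuous (fun t : ℝ => |U t| ^ (p - 2)) :=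
    Continuous.rpow_const (continuous_abs.comp hUcont) (fun x => Or.inr (by linarith))
  -- basic rpow bounds
  have habs_le : ∀ t : ℝ, 0 ≤ t → |U t| ^ (p - 2) ≤ M ^ (p - 2) := fun t ht =>
    Real.rpow_le_rpow (abs_nonneg _) (hM t ht) (by linarith)
  have hF_le : ∀ t : ℝ, 0 ≤ t → |(|U t| ^ (p - 2) * U t)| ≤ M ^ (p - 1) := by
    intro t ht
    have h1 : |(|U t| ^ (p - 2) * U t)| = |U t| ^ (p - 1) := by
      rcases eq_or_ne (U t) 0 with h | h
      · rw [h]; simp [Real.zero_rpow (by linarith : p - 2 ≠ 0),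
          Real.zero_rpow (by linarith : p - 1 ≠ 0)]
      · rw [abs_mul, abs_of_nonneg (Real.rpow_nonneg (abs_nonneg _) _),
          show p - 1 = (p - 2) + 1 by ring, Real.rpow_add_one (abs_ne_zero.mpr h)]
    rw [h1]
    exact Real.rpow_le_rpow (abs_nonneg _) (hM t ht) (by linarith)
  -- second derivative formulas
  have hU'' : ∀ t : ℝ, 0 ≤ t → deriv (deriv U) t
      = γ * deriv U t - Real.exp ((γ - 1) * t) * (|U t| ^ (p - 2) * U t) := by
    intro t ht
    have := deriv2_eq γ U (-(Real.exp (-t) * |U t| ^ (p - 2) * U t)) t hU'diff (hUeq t ht)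
    rw [this]
    have hE : Real.exp (γ * t) * Real.exp (-t) = Real.exp ((γ - 1) * t) := by
      rw [← Real.exp_add]; ring_nf
    linear_combination (-(|U t| ^ (p - 2) * U t)) * hE
  have hv'' : ∀ t : ℝ, 0 ≤ t → deriv (deriv v) t
      = γ * deriv v t - (p - 1) * Real.exp ((γ - 1) * t) * |U t| ^ (p - 2) * v t := by
    intro t ht
    have := deriv2_eq γ v (-((p - 1) * Real.exp (-t) * |U t| ^ (p - 2) * v t)) t hv'diff (hveq t ht)
    rw [this]
    have hE : Real.exp (γ * t) * Real.exp (-t) = Real.exp ((γ - 1) * t) := by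
      rw [← Real.exp_add]; ring_nf
    linear_combination (-((p - 1) * |U t| ^ (p - 2) * v t)) * hE
  -- weighted derivatives wU, wv and their limits
  set wU : ℝ → ℝ := fun t => Real.exp (-γ * t) * deriv U t with hwU_def
  set wv : ℝ → ℝ := fun t => Real.exp (-γ * t) * deriv v t with hwv_def
  have hwUd : ∀ t : ℝ, 0 ≤ t →
      HasDerivAt wU (-(Real.exp (-t) * |U t| ^ (p - 2) * U t)) t := by
    intro t ht
    have hd := hasDerivAt_expw γ (deriv U) (deriv (deriv U)) t (hU'diff t).hasDerivAt
    have : -γ * Real.exp (-γ * t) * deriv U t + Real.exp (-γ * t) * deriv (deriv U) t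
        = -(Real.exp (-t) * |U t| ^ (p - 2) * U t) := by
      rw [← hd.deriv]; exact hUeq t ht
    rw [← this]; exact hd
  have hwvd : ∀ t : ℝ, 0 ≤ t →
      HasDerivAt wv (-((p - 1) * Real.exp (-t) * |U t| ^ (p - 2) * v t)) t := by
    intro t ht
    have hd := hasDerivAt_expw γ (deriv v) (deriv (deriv v)) t (hv'diff t).hasDerivAt
    have : -γ * Real.exp (-γ * t) * deriv v t + Real.exp (-γ * t) * deriv (deriv v) t
        = -((p - 1) * Real.exp (-t) * |U t| ^ (p - 2) * v t) := by
      rw [← hd.deriv]; exact hveq t ht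
    rw [← this]; exact hd
  -- decay of wU
  obtain ⟨ℓU, hℓUt, hℓUb⟩ := decay wU (fun t => -(Real.exp (-t) * |U t| ^ (p - 2) * U t))
    (M ^ (p - 1)) (Real.rpow_nonneg hM0 _) hwUd
    (Continuous.continuousOn (by
      have : Continuous (fun t => Real.exp (-t) * (|U t| ^ (p - 2) * U t)) :=
        (Real.continuous_exp.comp continuous_neg).mul (hFc.comp hUcont)
      exact this.neg.congr (fun t => by simp only [Pi.neg_apply]; ring)))
    (by
      intro t ht
      have h1 : |(-(Real.exp (-t) * |U t| ^ (p - 2) * U t))| =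
          Real.exp (-t) * |(|U t| ^ (p - 2) * U t)| := by
        rw [abs_neg, mul_assoc, abs_mul, abs_of_pos (Real.exp_pos _)]
      rw [h1]
      calc Real.exp (-t) * |(|U t| ^ (p - 2) * U t)| ≤ Real.exp (-t) * M ^ (p - 1) :=
            mul_le_mul_of_nonneg_left (hF_le t ht) (le_of_lt (Real.exp_pos _))
        _ = M ^ (p - 1) * Real.exp (-t) := by ring)
  have hℓU0 : ℓU = 0 := limzero γ M ℓU hγ0 U (deriv U)
    (fun t => (hUdiff t).hasDerivAt) hU'cont hM hℓUt
  rw [hℓU0] at hℓUt hℓUb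
  simp only [sub_zero] at hℓUb
  -- bound on deriv U
  have hU'bd : ∀ t : ℝ, 0 ≤ t → |deriv U t| ≤ M ^ (p - 1) := by
    intro t ht
    have h1 : deriv U t = Real.exp (γ * t) * wU t := by
      show deriv U t = Real.exp (γ * t) * (Real.exp (-γ * t) * deriv U t)
      rw [← mul_assoc, ← Real.exp_add, show γ * t + -γ * t = 0 by ring, Real.exp_zero, one_mul]
    rw [h1, abs_mul, abs_of_pos (Real.exp_pos _)]
    calc Real.exp (γ * t) * |wU t| ≤ Real.exp (γ * t) * (M ^ (p - 1) * Real.exp (-t)) :=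
          mul_le_mul_of_nonneg_left (hℓUb t ht) (le_of_lt (Real.exp_pos _))
      _ = M ^ (p - 1) * Real.exp ((γ - 1) * t) := by
          rw [show Real.exp (γ * t) * (M ^ (p-1) * Real.exp (-t))
            = M ^ (p-1) * (Real.exp (γ * t) * Real.exp (-t)) by ring, ← Real.exp_add]
          ring_nf
      _ ≤ M ^ (p - 1) * 1 := by
          apply mul_le_mul_of_nonneg_left _ (Real.rpow_nonneg hM0 _)
          rw [Real.exp_le_one_iff]
          nlinarith
      _ = M ^ (p - 1) := mul_one _
  -- decay of wv
  obtain ⟨ℓv, hℓvt, hℓvb⟩ := decay wv (fun t => -((p - 1) * Real.exp (-t) * |U t| ^ (p - 2) * v t))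
    ((p - 1) * M ^ (p - 2) * Cv) (mul_nonneg (mul_nonneg (by linarith) (Real.rpow_nonneg hM0 _)) hCv0) hwvd
    (Continuous.continuousOn (by
      have : Continuous (fun t => ((p-1) * Real.exp (-t) * |U t| ^ (p - 2)) * v t) :=
        (((continuous_const.mul (Real.continuous_exp.comp continuous_neg)).mul habsc).mul hvcont)
      exact this.neg.congr (fun t => by simp only [Pi.neg_apply])))
    (by
      intro t ht
      have h1 : |(-((p - 1) * Real.exp (-t) * |U t| ^ (p - 2) * v t))|
          = (p - 1) * Real.exp (-t) * (|U t| ^ (p - 2)) * |v t| := by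
        rw [abs_neg, abs_mul, abs_mul, abs_mul]
        rw [abs_of_nonneg (by linarith : (0:ℝ) ≤ p - 1), abs_of_pos (Real.exp_pos _),
          abs_of_nonneg (Real.rpow_nonneg (abs_nonneg _) _)]
      rw [h1]
      have h2 : |U t| ^ (p - 2) * |v t| ≤ M ^ (p - 2) * Cv :=
        mul_le_mul (habs_le t ht) (hCv t ht) (abs_nonneg _) (Real.rpow_nonneg hM0 _)
      calc (p - 1) * Real.exp (-t) * (|U t| ^ (p - 2)) * |v t|
          = ((p-1) * Real.exp (-t)) * (|U t| ^ (p - 2) * |v t|) := by ring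
        _ ≤ ((p-1) * Real.exp (-t)) * (M ^ (p - 2) * Cv) := by
            apply mul_le_mul_of_nonneg_left h2 (mul_nonneg (by linarith) (le_of_lt (Real.exp_pos _)))
        _ = (p - 1) * M ^ (p - 2) * Cv * Real.exp (-t) := by ring)
  have hℓv0 : ℓv = 0 := limzero γ Cv ℓv hγ0 v (deriv v)
    (fun t => (hvdiff t).hasDerivAt) hv'cont hCv hℓvt
  rw [hℓv0] at hℓvt
  -- the Wronskian Wg of v and Z = U' + cU
  set ζ : ℝ → ℝ := fun t => (γ + c) * (Real.exp (-γ * t) * deriv U t)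
      - Real.exp (-t) * (|U t| ^ (p - 2) * U t) with hζ_def
  set Wg : ℝ → ℝ := fun t => (Real.exp (-γ * t) * deriv v t) * (deriv U t + c * U t)
      - ζ t * v t with hW_def
  have hexpneg_tendsto : Tendsto (fun t : ℝ => Real.exp (-t)) atTop (nhds 0) :=
    Real.tendsto_exp_atBot.comp tendsto_neg_atTop_atBot
  have hζ0 : Tendsto ζ atTop (nhds 0) := by
    have h1 : Tendsto (fun t => (γ + c) * (Real.exp (-γ * t) * deriv U t)) atTop
        (nhds ((γ + c) * 0)) := hℓUt.const_mul (γ + c)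
    rw [mul_zero] at h1
    have h2 : Tendsto (fun t => Real.exp (-t) * (|U t| ^ (p - 2) * U t)) atTop (nhds 0) := by
      apply squeeze_zero_norm' (a := fun t => M ^ (p - 1) * Real.exp (-t))
      · filter_upwards [eventually_ge_atTop (0:ℝ)] with t ht
        rw [norm_mul, Real.norm_eq_abs, Real.norm_eq_abs, abs_of_pos (Real.exp_pos _)]
        calc Real.exp (-t) * |(|U t| ^ (p - 2) * U t)| ≤ Real.exp (-t) * M ^ (p - 1) :=
              mul_le_mul_of_nonneg_left (hF_le t ht) (le_of_lt (Real.exp_pos _))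
          _ = M ^ (p - 1) * Real.exp (-t) := by ring
      · simpa using hexpneg_tendsto.const_mul (M ^ (p - 1))
    have h3 := h1.sub h2
    rw [sub_zero] at h3
    exact h3
  have hWlim : Tendsto Wg atTop (nhds 0) := by
    have h1 : Tendsto (fun t => (Real.exp (-γ * t) * deriv v t) * (deriv U t + c * U t))
        atTop (nhds 0) := by
      apply squeeze_zero_norm' (a := fun t => |wv t| * (M ^ (p - 1) + |c| * M))
      · filter_upwards [eventually_ge_atTop (0:ℝ)] with t ht
        rw [norm_mul, Real.norm_eq_abs, Real.norm_eq_abs]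
        apply mul_le_mul_of_nonneg_left _ (abs_nonneg _)
        calc |deriv U t + c * U t| ≤ |deriv U t| + |c * U t| := abs_add_le _ _
          _ ≤ M ^ (p - 1) + |c| * M := by
              rw [abs_mul]
              have := hU'bd t ht
              have h3 : |c| * |U t| ≤ |c| * M :=
                mul_le_mul_of_nonneg_left (hM t ht) (abs_nonneg c)
              linarith
      · have := (hℓvt.abs).mul_const (M ^ (p - 1) + |c| * M)
        simpa using this
    have h2 : Tendsto (fun t => ζ t * v t) atTop (nhds 0) := by
      apply squeeze_zero_norm' (a := fun t => |ζ t| * Cv)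
      · filter_upwards [eventually_ge_atTop (0:ℝ)] with t ht
        rw [norm_mul, Real.norm_eq_abs, Real.norm_eq_abs]
        exact mul_le_mul_of_nonneg_left (hCv t ht) (abs_nonneg _)
      · simpa using (hζ0.abs).mul_const Cv
    have h3 := h1.sub h2
    rw [sub_zero] at h3
    exact h3
  have hWd : ∀ x, 0 ≤ x → HasDerivAt Wg 0 x := by
    intro x hx
    have hA : HasDerivAt (fun t => Real.exp (-γ * t) * deriv v t)
        (-γ * Real.exp (-γ * x) * deriv v x + Real.exp (-γ * x) * deriv (deriv v) x) x :=
      hasDerivAt_expw γ (deriv v) (deriv (deriv v)) x (hv'diff x).hasDerivAt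
    have hZx : HasDerivAt (fun t => deriv U t + c * U t)
        (deriv (deriv U) x + c * deriv U x) x :=
      (hU'diff x).hasDerivAt.add ((hUdiff x).hasDerivAt.const_mul c)
    have h1 : HasDerivAt (fun t => (Real.exp (-γ * t) * deriv v t) * (deriv U t + c * U t))
        ((-γ * Real.exp (-γ * x) * deriv v x + Real.exp (-γ * x) * deriv (deriv v) x)
            * (deriv U x + c * U x)
          + (Real.exp (-γ * x) * deriv v x) * (deriv (deriv U) x + c * deriv U x)) x :=
      hA.mul hZx
    have hwUx : HasDerivAt (fun t => Real.exp (-γ * t) * deriv U t)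
        (-γ * Real.exp (-γ * x) * deriv U x + Real.exp (-γ * x) * deriv (deriv U) x) x :=
      hasDerivAt_expw γ (deriv U) (deriv (deriv U)) x (hU'diff x).hasDerivAt
    have hB : HasDerivAt (fun t => (γ + c) * (Real.exp (-γ * t) * deriv U t))
        ((γ + c) * (-γ * Real.exp (-γ * x) * deriv U x + Real.exp (-γ * x) * deriv (deriv U) x)) x :=
      hwUx.const_mul (γ + c)
    have hexd : HasDerivAt (fun t : ℝ => Real.exp (-t)) (-Real.exp (-x)) x := by
      simpa using ((hasDerivAt_id x).neg).exp
    have hCd : HasDerivAt (fun t => Real.exp (-t) * (|U t| ^ (p - 2) * U t))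
        ((-Real.exp (-x)) * (|U x| ^ (p - 2) * U x)
          + Real.exp (-x) * ((p - 1) * |U x| ^ (p - 2) * deriv U x)) x :=
      hexd.mul (hFU x)
    have hζd : HasDerivAt ζ
        ((γ + c) * (-γ * Real.exp (-γ * x) * deriv U x + Real.exp (-γ * x) * deriv (deriv U) x)
          - ((-Real.exp (-x)) * (|U x| ^ (p - 2) * U x)
            + Real.exp (-x) * ((p - 1) * |U x| ^ (p - 2) * deriv U x))) x := hB.sub hCd
    have h2 : HasDerivAt (fun t => ζ t * v t)
        (((γ + c) * (-γ * Real.exp (-γ * x) * deriv U x + Real.exp (-γ * x) * deriv (deriv U) x)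
          - ((-Real.exp (-x)) * (|U x| ^ (p - 2) * U x)
            + Real.exp (-x) * ((p - 1) * |U x| ^ (p - 2) * deriv U x))) * v x
          + ((γ + c) * (Real.exp (-γ * x) * deriv U x)
            - Real.exp (-x) * (|U x| ^ (p - 2) * U x)) * deriv v x) x :=
      hζd.mul (hvdiff x).hasDerivAt
    have hW := h1.sub h2
    have hu2 := hU'' x hx
    have hv2x := hv'' x hx
    have hEid : Real.exp (-γ * x) * Real.exp ((γ - 1) * x) = Real.exp (-x) := by
      rw [← Real.exp_add]; ring_nf
    have hDzero : ((-γ * Real.exp (-γ * x) * deriv v x + Real.exp (-γ * x) * deriv (deriv v) x)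
            * (deriv U x + c * U x)
          + (Real.exp (-γ * x) * deriv v x) * (deriv (deriv U) x + c * deriv U x))
        - (((γ + c) * (-γ * Real.exp (-γ * x) * deriv U x + Real.exp (-γ * x) * deriv (deriv U) x)
          - ((-Real.exp (-x)) * (|U x| ^ (p - 2) * U x)
            + Real.exp (-x) * ((p - 1) * |U x| ^ (p - 2) * deriv U x))) * v x
          + ((γ + c) * (Real.exp (-γ * x) * deriv U x)
            - Real.exp (-x) * (|U x| ^ (p - 2) * U x)) * deriv v x) = 0 := by
      rw [← hEid]
      linear_combination (Real.exp (-γ * x) * (deriv U x + c * U x)) * hv2x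
        + (Real.exp (-γ * x) * deriv v x - (γ + c) * Real.exp (-γ * x) * v x) * hu2
        + (-(Real.exp (-γ * x) * Real.exp ((γ - 1) * x) * v x * (|U x| ^ (p - 2)) * U x)) * hc
    rw [hDzero] at hW
    exact hW
  -- Wg is constant, hence ≡ 0, hence deriv v 0 * deriv U 0 = 0
  have hWc : Continuous Wg := by
    apply Continuous.sub
    · exact ((Real.continuous_exp.comp (continuous_const.mul continuous_id)).mul hv'cont).mul
        (hU'cont.add (continuous_const.mul hUcont))
    · apply Continuous.mul _ hvcont
      apply Continuous.sub
      · exact continuous_const.mul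
          ((Real.continuous_exp.comp (continuous_const.mul continuous_id)).mul hU'cont)
      · exact (Real.continuous_exp.comp continuous_neg).mul (hFc.comp hUcont)
  have hWconst := const_of_deriv0 Wg hWc hWd
  have hW00 : Wg 0 = 0 := by
    have htend : Tendsto Wg atTop (nhds (Wg 0)) := by
      apply Tendsto.congr' _ (tendsto_const_nhds)
      filter_upwards [eventually_ge_atTop (0:ℝ)] with t ht
      exact (hWconst t ht).symm
    exact tendsto_nhds_unique htend hWlim
  have hkey : deriv v 0 * deriv U 0 = 0 := by
    have h0 : Wg 0 = deriv v 0 * deriv U 0 := by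
      rw [hW_def]
      simp [hU0, hv0]
    rw [← h0, hW00]
  -- the potential r
  set r : ℝ → ℝ := fun t => (p - 1) * Real.exp ((γ - 1) * t) * |U t| ^ (p - 2) with hr_def
  have hrc : Continuous r :=
    (continuous_const.mul (Real.continuous_exp.comp (continuous_const.mul continuous_id))).mul habsc
  by_cases hU'0 : deriv U 0 = 0
  · -- degenerate case: leads to a contradiction with L > 0
    exfalso
    set Z : ℝ → ℝ := fun t => deriv U t + c * U t with hZ_def
    set Z1 : ℝ → ℝ := fun t => deriv (deriv U) t + c * deriv U t with hZ1_def
    have hZd : ∀ t, HasDerivAt Z (Z1 t) t := fun t =>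
      (hU'diff t).hasDerivAt.add ((hUdiff t).hasDerivAt.const_mul c)
    have hZ10 : Z1 0 = 0 := by
      rw [hZ1_def]
      simp only
      rw [hU'' 0 le_rfl, hU0, hU'0]
      simp
    have hZ0 : Z 0 = 0 := by rw [hZ_def]; simp [hU0, hU'0]
    have hZzero : ∀ t, 0 ≤ t → Z t = 0 := by
      apply uniq γ r Z Z1 hrc.continuousOn hZd (hU''cont.add (continuous_const.mul hU'cont))
        _ hZ0 hZ10
      intro t ht
      have hG : HasDerivAt (fun s => γ * deriv U s - Real.exp ((γ - 1) * s) * (|U s| ^ (p - 2) * U s))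
          (γ * deriv (deriv U) t - ((γ - 1) * Real.exp ((γ - 1) * t) * (|U t| ^ (p - 2) * U t)
            + Real.exp ((γ - 1) * t) * ((p - 1) * |U t| ^ (p - 2) * deriv U t))) t := by
        apply HasDerivAt.sub
        · exact (hU'diff t).hasDerivAt.const_mul γ
        · have he : HasDerivAt (fun s : ℝ => Real.exp ((γ - 1) * s))
              ((γ - 1) * Real.exp ((γ - 1) * t)) t := by
            have := ((hasDerivAt_id t).const_mul (γ - 1)).exp
            simpa [mul_comm] using this
          have := he.mul (hFU t)
          exact this.congr_deriv (by ring)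
      have heq : deriv (deriv U) =ᶠ[nhds t]
          (fun s => γ * deriv U s - Real.exp ((γ - 1) * s) * (|U s| ^ (p - 2) * U s)) := by
        filter_upwards [isOpen_Ioi.mem_nhds ht] with s hs
        exact hU'' s (le_of_lt hs)
      have hUdd : HasDerivAt (deriv (deriv U))
          (γ * deriv (deriv U) t - ((γ - 1) * Real.exp ((γ - 1) * t) * (|U t| ^ (p - 2) * U t)
            + Real.exp ((γ - 1) * t) * ((p - 1) * |U t| ^ (p - 2) * deriv U t))) t :=
        hG.congr_of_eventuallyEq heq
      have hZ1d : HasDerivAt Z1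
          ((γ * deriv (deriv U) t - ((γ - 1) * Real.exp ((γ - 1) * t) * (|U t| ^ (p - 2) * U t)
            + Real.exp ((γ - 1) * t) * ((p - 1) * |U t| ^ (p - 2) * deriv U t)))
            + c * deriv (deriv U) t) t :=
        hUdd.add ((hU'diff t).hasDerivAt.const_mul c)
      have hval : (γ * deriv (deriv U) t - ((γ - 1) * Real.exp ((γ - 1) * t) * (|U t| ^ (p - 2) * U t)
            + Real.exp ((γ - 1) * t) * ((p - 1) * |U t| ^ (p - 2) * deriv U t)))
            + c * deriv (deriv U) t = γ * Z1 t - r t * Z t := by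
        have hu2 := hU'' t (le_of_lt ht)
        rw [hZ1_def, hZ_def, hr_def]
        simp only
        linear_combination c * hu2 + (Real.exp ((γ - 1) * t) * (|U t| ^ (p - 2)) * U t) * hc
      rw [hval] at hZ1d
      exact hZ1d
    -- U ≡ 0 on [0,∞), contradicting the limit L > 0
    have hUzero : ∀ t, 0 ≤ t → U t = 0 := by
      have hh : ∀ x, 0 ≤ x → HasDerivAt (fun t => Real.exp (c * t) * U t) 0 x := by
        intro x hx
        have he : HasDerivAt (fun t : ℝ => Real.exp (c * t)) (c * Real.exp (c * x)) x := by
          have := ((hasDerivAt_id x).const_mul c).exp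
          simpa [mul_comm] using this
        have := he.mul (hUdiff x).hasDerivAt
        have hval : c * Real.exp (c * x) * U x + Real.exp (c * x) * deriv U x
            = Real.exp (c * x) * Z x := by rw [hZ_def]; ring
        rw [hval, hZzero x hx, mul_zero] at this
        exact this
      have hconst := const_of_deriv0 (fun t => Real.exp (c * t) * U t)
        ((Real.continuous_exp.comp (continuous_const.mul continuous_id)).mul hUcont) hh
      intro t ht
      have h5 := hconst t ht
      rw [hU0, mul_zero] at h5
      exact (mul_eq_zero.mp h5).resolve_left (Real.exp_ne_zero _)
    have hUlim0 : Tendsto U atTop (nhds 0) := by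
      apply Tendsto.congr' _ (tendsto_const_nhds)
      filter_upwards [eventually_ge_atTop (0:ℝ)] with t ht
      exact (hUzero t ht).symm
    have : L = 0 := tendsto_nhds_unique hUlim hUlim0
    linarith
  · -- nondegenerate case: deriv v 0 = 0, so v ≡ 0
    have hv'0 : deriv v 0 = 0 := by
      rcases mul_eq_zero.mp hkey with h | h
      · exact h
      · exact absurd h hU'0
    apply uniq γ r v (deriv v) hrc.continuousOn (fun t => (hvdiff t).hasDerivAt) hv'cont
      _ hv0 hv'0
    intro t ht
    have hd : HasDerivAt (deriv v) (deriv (deriv v) t) t := (hv'diff t).hasDerivAt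
    have hval : deriv (deriv v) t = γ * deriv v t - r t * v t := by
      rw [hv'' t (le_of_lt ht), hr_def]
    rw [hval] at hd
    exact hd
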